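/- Corollary: Let (X,Y), (X',Y'), (X'',Y'') be iid pairs of real random variables, with X taking values in [a,b] and Y taking values in [c,d], for real numbers a ≤ b, c ≤ d. Then dCov(X,Y) ≤ (1/2)·√((b−a)(d−c)). Equivalently, dCov²(X,Y) ≤ (1/4)·(b−a)(d−c). -/

import Mathlib

open MeasureTheory ProbabilityTheory

section Aux
variable {Ω : Type*} [MeasurableSpace Ω] {μ : Measure Ω}

lemma integrable_of_bdd [IsFiniteMeasure μ] {f : Ω → ℝ} (hf : AEStronglyMeasurable f μ)
    (C : ℝ) (hC : ∀ᵐ ω ∂μ, |f ω| ≤ C) : Integrable f μ := by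
  refine Integrable.mono' (integrable_const C) hf ?_
  simpa [Real.norm_eq_abs] using hC

noncomputable def indf (t : ℝ) (x : ℝ) : ℝ := if x ≤ t then 1 else 0

lemma indf_mem (t x : ℝ) : indf t x = 0 ∨ indf t x = 1 := by
  unfold indf; split <;> simp

lemma indf_nonneg (t x : ℝ) : 0 ≤ indf t x := by rcases indf_mem t x with h | h <;> simp [h]
lemma indf_le_one (t x : ℝ) : indf t x ≤ 1 := by rcases indf_mem t x with h | h <;> simp [h]

lemma measurable_indf : Measurable (fun p : ℝ × ℝ => indf p.1 p.2) := by
  unfold indf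
  exact Measurable.ite (measurableSet_le measurable_snd measurable_fst) measurable_const
    measurable_const

lemma abs_indf_eq_indicator (x x' t : ℝ) :
    |indf t x - indf t x'| = (Set.Ico (min x x') (max x x')).indicator (fun _ => (1:ℝ)) t := by
  rw [Set.indicator_apply]
  rcases le_or_gt x t with h1 | h1 <;> rcases le_or_gt x' t with h2 | h2
  · rw [if_neg (by rintro ⟨-, hlt⟩; exact absurd hlt (not_lt.2 (max_le h1 h2)))]
    simp [indf, h1, h2]
  · rw [if_pos ⟨le_trans (min_le_left _ _) h1, lt_of_lt_of_le h2 (le_max_right _ _)⟩]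
    simp [indf, h1, not_le.2 h2]
  · rw [if_pos ⟨le_trans (min_le_right _ _) h2, lt_of_lt_of_le h1 (le_max_left _ _)⟩]
    simp [indf, h2, not_le.2 h1]
  · rw [if_neg (by rintro ⟨hle, -⟩; exact absurd hle (not_le.2 (lt_min h1 h2)))]
    simp [indf, not_le.2 h1, not_le.2 h2]

/-- key one-dimensional representation -/
lemma abs_sub_eq_integral_indf {a b x x' : ℝ} (hx : x ∈ Set.Icc a b) (hx' : x' ∈ Set.Icc a b) :
    ∫ t in Set.Ioc a b, |indf t x - indf t x'| = |x - x'| := by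
  set m := min x x' with hm
  set M := max x x' with hM
  have h1 : (∫ t in Set.Ioc a b, |indf t x - indf t x'|)
      = ∫ t in Set.Ioc a b, (Set.Ico m M).indicator (fun _ => (1:ℝ)) t := by
    refine integral_congr_ae (Filter.Eventually.of_forall fun t => ?_)
    exact abs_indf_eq_indicator x x' t
  rw [h1, integral_indicator measurableSet_Ico, setIntegral_const,
    measureReal_def, Measure.restrict_apply measurableSet_Ico]
  have hmM : m ≤ M := min_le_max
  have hvol : volume (Set.Ico m M ∩ Set.Ioc a b) = ENNReal.ofReal (M - m) := by
    apply le_antisymm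
    · calc volume (Set.Ico m M ∩ Set.Ioc a b) ≤ volume (Set.Ico m M) :=
            measure_mono Set.inter_subset_left
        _ = ENNReal.ofReal (M - m) := by rw [Real.volume_Ico]
    · have hsub : Set.Ioo m M ⊆ Set.Ico m M ∩ Set.Ioc a b := by
        rintro t ⟨ht1, ht2⟩
        have ham : a ≤ m := le_min hx.1 hx'.1
        have hMb : M ≤ b := max_le hx.2 hx'.2
        exact ⟨⟨ht1.le, ht2⟩, ⟨lt_of_le_of_lt ham ht1, le_trans ht2.le hMb⟩⟩
      calc ENNReal.ofReal (M - m) = volume (Set.Ioo m M) := by rw [Real.volume_Ioo]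
        _ ≤ _ := measure_mono hsub
    
  rw [hvol, ENNReal.toReal_ofReal (by linarith), smul_eq_mul, mul_one]
  rw [abs_sub_comm] at *
  rcases le_total x x' with h | h
  · rw [hM, hm, max_eq_right h, min_eq_left h, abs_of_nonneg (by linarith)]
  · rw [hM, hm, max_eq_left h, min_eq_right h, abs_of_nonpos (by linarith)]; ring
end Aux

section Aux2
variable {Ω : Type*} [MeasurableSpace Ω] {μ : Measure Ω}
variable {γ δ ε : Type*} [MeasurableSpace γ] [MeasurableSpace δ] [MeasurableSpace ε]

lemma int_mul_pair {W : Ω → γ} {Z : Ω → δ} (hW : Measurable W) (hZ : Measurable Z)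
    (h : IndepFun W Z μ) {f : γ → ℝ} {g : δ → ℝ} (hf : Measurable f) (hg : Measurable g) :
    ∫ ω, f (W ω) * g (Z ω) ∂μ = (∫ ω, f (W ω) ∂μ) * ∫ ω, g (Z ω) ∂μ :=
  h.integral_fun_comp_mul_comp hW.aemeasurable hZ.aemeasurable hf.aestronglyMeasurable
    hg.aestronglyMeasurable

lemma int_mul_triple {P : Ω → γ} {Q : Ω → δ} {R : Ω → ε}
    (hP : Measurable P) (hQ : Measurable Q) (hR : Measurable R)
    (h12 : IndepFun P Q μ) (h123 : IndepFun (fun ω => (P ω, Q ω)) R μ)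
    {f : γ → ℝ} {g : δ → ℝ} {h : ε → ℝ}
    (hf : Measurable f) (hg : Measurable g) (hh : Measurable h) :
    ∫ ω, f (P ω) * g (Q ω) * h (R ω) ∂μ
      = (∫ ω, f (P ω) ∂μ) * (∫ ω, g (Q ω) ∂μ) * ∫ ω, h (R ω) ∂μ := by
  have key := int_mul_pair (hP.prodMk hQ) hR h123
    (f := fun z : γ × δ => f z.1 * g z.2) (g := h)
    ((hf.comp measurable_fst).mul (hg.comp measurable_snd)) hh
  simpa [int_mul_pair hP hQ h12 hf hg] using key

lemma int_mul_triple' {P : Ω → γ} {Q : Ω → δ} {R : Ω → ε}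
    (hP : Measurable P) (hQ : Measurable Q) (hR : Measurable R)
    (h12 : IndepFun P Q μ) (h123 : IndepFun (fun ω => (P ω, Q ω)) R μ)
    {f : γ → ℝ} {g : δ → ℝ} {h : ε → ℝ}
    (hf : Measurable f) (hg : Measurable g) (hh : Measurable h) :
    ∫ ω, f (P ω) * (g (Q ω) * h (R ω)) ∂μ
      = (∫ ω, f (P ω) ∂μ) * (∫ ω, g (Q ω) ∂μ) * ∫ ω, h (R ω) ∂μ := by
  calc ∫ ω, f (P ω) * (g (Q ω) * h (R ω)) ∂μ = ∫ ω, f (P ω) * g (Q ω) * h (R ω) ∂μ := by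
        simp only [mul_assoc]
    _ = _ := int_mul_triple hP hQ hR h12 h123 hf hg hh

lemma expand_T1 {u u' v v' : ℝ} (hu : u = 0 ∨ u = 1) (hu' : u' = 0 ∨ u' = 1)
    (hv : v = 0 ∨ v = 1) (hv' : v' = 0 ∨ v' = 1) :
    |u - u'| * |v - v'| =
      u * v + u * v' + v * u' + u' * v'
      - 2 * (u * v * v') - 2 * (v * (u' * v')) - 2 * (u * v * u') - 2 * (u * (u' * v'))
      + 4 * (u * v * (u' * v')) := by
  rcases hu with rfl | rfl <;> rcases hu' with rfl | rfl <;> rcases hv with rfl | rfl <;>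
    rcases hv' with rfl | rfl <;> norm_num

lemma quarter_bound (p q r : ℝ) (hp0 : 0 ≤ p) (hp1 : p ≤ 1) (hq0 : 0 ≤ q) (hq1 : q ≤ 1)
    (hr0 : 0 ≤ r) (hrp : r ≤ p) (hrq : r ≤ q) (hpqr : p + q - 1 ≤ r) :
    4 * (r - p * q) ^ 2 ≤ 1 / 4 := by
  have h1 : r - p * q ≤ 1 / 4 := by
    rcases le_total p q with h | h
    · nlinarith [sq_nonneg (2 * p - 1), mul_le_mul_of_nonneg_left h hp0]
    · nlinarith [sq_nonneg (2 * q - 1), mul_le_mul_of_nonneg_left h hq0]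
  have h2 : p * q - r ≤ 1 / 4 := by
    rcases le_total (p + q) 1 with h | h
    · nlinarith [sq_nonneg (2 * p - 1), mul_le_mul_of_nonneg_left (by linarith : q ≤ 1 - p) hp0]
    · nlinarith [sq_nonneg (2 * p - 1), mul_le_mul_of_nonneg_left (by linarith : 1 - q ≤ p)
        (by linarith : (0:ℝ) ≤ 1 - p)]
  have h3 : (r - p * q) ^ 2 ≤ (1 / 4) ^ 2 := sq_le_sq' (by linarith) h1
  nlinarith [h3]

lemma onebit_sum {x y : ℝ} (hx : x = 0 ∨ x = 1) (hy : y = 0 ∨ y = 1) :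
    x + y - 1 ≤ x * y := by
  rcases hx with rfl | rfl <;> rcases hy with rfl | rfl <;> norm_num

lemma expand_single {u u' : ℝ} (hu : u = 0 ∨ u = 1) (hu' : u' = 0 ∨ u' = 1) :
    |u - u'| = u + u' - 2 * (u * u') := by
  rcases hu with rfl | rfl <;> rcases hu' with rfl | rfl <;> norm_num

lemma integral_comb9 {f1 f2 f3 f4 f5 f6 f7 f8 f9 : Ω → ℝ}
    (h1 : Integrable f1 μ) (h2 : Integrable f2 μ) (h3 : Integrable f3 μ)
    (h4 : Integrable f4 μ) (h5 : Integrable f5 μ) (h6 : Integrable f6 μ)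
    (h7 : Integrable f7 μ) (h8 : Integrable f8 μ) (h9 : Integrable f9 μ) :
    ∫ ω, (f1 ω + f2 ω + f3 ω + f4 ω - 2 * f5 ω - 2 * f6 ω - 2 * f7 ω - 2 * f8 ω + 4 * f9 ω) ∂μ
      = (∫ ω, f1 ω ∂μ) + (∫ ω, f2 ω ∂μ) + (∫ ω, f3 ω ∂μ) + (∫ ω, f4 ω ∂μ)
        - 2 * (∫ ω, f5 ω ∂μ) - 2 * (∫ ω, f6 ω ∂μ) - 2 * (∫ ω, f7 ω ∂μ) - 2 * (∫ ω, f8 ω ∂μ)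
        + 4 * (∫ ω, f9 ω ∂μ) := by
  have g1 : Integrable (fun ω => f1 ω + f2 ω) μ := h1.add h2
  have g2 : Integrable (fun ω => f1 ω + f2 ω + f3 ω) μ := g1.add h3
  have g3 : Integrable (fun ω => f1 ω + f2 ω + f3 ω + f4 ω) μ := g2.add h4
  have h5' : Integrable (fun ω => 2 * f5 ω) μ := h5.const_mul 2
  have h6' : Integrable (fun ω => 2 * f6 ω) μ := h6.const_mul 2
  have h7' : Integrable (fun ω => 2 * f7 ω) μ := h7.const_mul 2
  have h8' : Integrable (fun ω => 2 * f8 ω) μ := h8.const_mul 2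
  have h9' : Integrable (fun ω => 4 * f9 ω) μ := h9.const_mul 4
  have g4 : Integrable (fun ω => f1 ω + f2 ω + f3 ω + f4 ω - 2 * f5 ω) μ := g3.sub h5'
  have g5 : Integrable (fun ω => f1 ω + f2 ω + f3 ω + f4 ω - 2 * f5 ω - 2 * f6 ω) μ := g4.sub h6'
  have g6 : Integrable (fun ω => f1 ω + f2 ω + f3 ω + f4 ω - 2 * f5 ω - 2 * f6 ω - 2 * f7 ω) μ :=
    g5.sub h7'
  have g7 : Integrable
      (fun ω => f1 ω + f2 ω + f3 ω + f4 ω - 2 * f5 ω - 2 * f6 ω - 2 * f7 ω - 2 * f8 ω) μ :=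
    g6.sub h8'
  rw [integral_add g7 h9', integral_sub g6 h8', integral_sub g5 h7', integral_sub g4 h6',
    integral_sub g3 h5', integral_add g2 h4, integral_add g1 h3, integral_add h1 h2]
  simp only [← smul_eq_mul, integral_smul]

lemma integral_comb3 {f1 f2 f3 : Ω → ℝ}
    (h1 : Integrable f1 μ) (h2 : Integrable f2 μ) (h3 : Integrable f3 μ) :
    ∫ ω, (f1 ω + f2 ω - 2 * f3 ω) ∂μ
      = (∫ ω, f1 ω ∂μ) + (∫ ω, f2 ω ∂μ) - 2 * (∫ ω, f3 ω ∂μ) := by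
  have g1 : Integrable (fun ω => f1 ω + f2 ω) μ := h1.add h2
  have h3' : Integrable (fun ω => 2 * f3 ω) μ := h3.const_mul 2
  rw [integral_sub g1 h3', integral_add h1 h2]
  simp only [← smul_eq_mul, integral_smul]

end Aux2

section Psi
variable {Ω : Type*} [MeasurableSpace Ω]

lemma abs_mul_le_one {x y : ℝ} (hx : |x| ≤ 1) (hy : |y| ≤ 1) : |x * y| ≤ 1 := by
  rw [abs_mul]; exact mul_le_one₀ hx (abs_nonneg _) hy

lemma abs_indf_le_one (t x : ℝ) : |indf t x| ≤ 1 := by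
  rcases indf_mem t x with h | h <;> simp [h]

lemma psi_le (μ : Measure Ω) [IsProbabilityMeasure μ]
    (X X' X'' : Ω → ℝ) (Y Y' Y'' : Ω → ℝ)
    (hXm : Measurable X) (hX'm : Measurable X') (hX''m : Measurable X'')
    (hYm : Measurable Y) (hY'm : Measurable Y') (hY''m : Measurable Y'')
    (hindep : iIndepFun
      ![fun ω => (X ω, Y ω), fun ω => (X' ω, Y' ω), fun ω => (X'' ω, Y'' ω)] μ)
    (hid1 : IdentDistrib (fun ω => (X ω, Y ω)) (fun ω => (X' ω, Y' ω)) μ μ)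
    (hid2 : IdentDistrib (fun ω => (X ω, Y ω)) (fun ω => (X'' ω, Y'' ω)) μ μ)
    (t s : ℝ) :
    (∫ ω, |indf t (X ω) - indf t (X' ω)| * |indf s (Y ω) - indf s (Y' ω)| ∂μ)
      + (∫ ω, |indf t (X ω) - indf t (X' ω)| ∂μ) * (∫ ω, |indf s (Y ω) - indf s (Y' ω)| ∂μ)
      - (∫ ω, |indf t (X ω) - indf t (X' ω)| * |indf s (Y ω) - indf s (Y'' ω)| ∂μ)
      - (∫ ω, |indf t (X ω) - indf t (X'' ω)| * |indf s (Y ω) - indf s (Y' ω)| ∂μ)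
      ≤ 1 / 4 := by
  have hP1 : Measurable (fun ω => (X ω, Y ω)) := hXm.prodMk hYm
  have hP2 : Measurable (fun ω => (X' ω, Y' ω)) := hX'm.prodMk hY'm
  have hP3 : Measurable (fun ω => (X'' ω, Y'' ω)) := hX''m.prodMk hY''m
  have hmeas : ∀ i, Measurable
      (![fun ω => (X ω, Y ω), fun ω => (X' ω, Y' ω), fun ω => (X'' ω, Y'' ω)] i) := by
    intro i
    fin_cases i
    · exact hP1
    · exact hP2
    · exact hP3
  have hI12 : IndepFun (fun ω => (X ω, Y ω)) (fun ω => (X' ω, Y' ω)) μ := by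
    have h := hindep.indepFun (i := 0) (j := 1) (by decide)
    simpa using h
  have hI13 : IndepFun (fun ω => (X ω, Y ω)) (fun ω => (X'' ω, Y'' ω)) μ := by
    have h := hindep.indepFun (i := 0) (j := 2) (by decide)
    simpa using h
  have hI23 : IndepFun (fun ω => (X' ω, Y' ω)) (fun ω => (X'' ω, Y'' ω)) μ := by
    have h := hindep.indepFun (i := 1) (j := 2) (by decide)
    simpa using h
  have hI12_3 : IndepFun (fun ω => ((X ω, Y ω), (X' ω, Y' ω))) (fun ω => (X'' ω, Y'' ω)) μ := by
    have h := hindep.indepFun_prodMk hmeas 0 1 2 (by decide) (by decide)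
    simpa using h
  have hI13_2 : IndepFun (fun ω => ((X ω, Y ω), (X'' ω, Y'' ω))) (fun ω => (X' ω, Y' ω)) μ := by
    have h := hindep.indepFun_prodMk hmeas 0 2 1 (by decide) (by decide)
    simpa using h
  have hφm : Measurable (fun z : ℝ × ℝ => indf t z.1) :=
    measurable_indf.comp (measurable_const.prodMk measurable_fst)
  have hψm : Measurable (fun z : ℝ × ℝ => indf s z.2) :=
    measurable_indf.comp (measurable_const.prodMk measurable_snd)
  have hχm : Measurable (fun z : ℝ × ℝ => indf t z.1 * indf s z.2) := hφm.mul hψm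
  set p := ∫ ω, indf t (X ω) ∂μ with hp
  set q := ∫ ω, indf s (Y ω) ∂μ with hq
  set r := ∫ ω, indf t (X ω) * indf s (Y ω) ∂μ with hr
  have hu : Measurable (fun ω => indf t (X ω)) := hφm.comp hP1
  have hu' : Measurable (fun ω => indf t (X' ω)) := hφm.comp hP2
  have hu'' : Measurable (fun ω => indf t (X'' ω)) := hφm.comp hP3
  have hv : Measurable (fun ω => indf s (Y ω)) := hψm.comp hP1
  have hv' : Measurable (fun ω => indf s (Y' ω)) := hψm.comp hP2
  have hv'' : Measurable (fun ω => indf s (Y'' ω)) := hψm.comp hP3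
  have intg : ∀ {f : Ω → ℝ}, Measurable f → (∀ ω, |f ω| ≤ 1) → Integrable f μ :=
    fun hm hb => integrable_of_bdd hm.aestronglyMeasurable 1 (Filter.Eventually.of_forall hb)
  -- single identdistrib values
  have eu' : ∫ ω, indf t (X' ω) ∂μ = p := ((hid1.comp hφm).integral_eq).symm
  have ev' : ∫ ω, indf s (Y' ω) ∂μ = q := ((hid1.comp hψm).integral_eq).symm
  have euv' : ∫ ω, indf t (X' ω) * indf s (Y' ω) ∂μ = r := ((hid1.comp hχm).integral_eq).symm
  have eu'' : ∫ ω, indf t (X'' ω) ∂μ = p := ((hid2.comp hφm).integral_eq).symm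
  have ev'' : ∫ ω, indf s (Y'' ω) ∂μ = q := ((hid2.comp hψm).integral_eq).symm
  -- pair monomials
  have m2 : ∫ ω, indf t (X ω) * indf s (Y' ω) ∂μ = p * q := by
    have h : ∫ ω, indf t (X ω) * indf s (Y' ω) ∂μ
        = (∫ ω, indf t (X ω) ∂μ) * ∫ ω, indf s (Y' ω) ∂μ :=
      int_mul_pair hP1 hP2 hI12 hφm hψm
    rw [h, ev', ← hp]
  have m3 : ∫ ω, indf s (Y ω) * indf t (X' ω) ∂μ = q * p := by
    have h : ∫ ω, indf s (Y ω) * indf t (X' ω) ∂μ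
        = (∫ ω, indf s (Y ω) ∂μ) * ∫ ω, indf t (X' ω) ∂μ :=
      int_mul_pair hP1 hP2 hI12 hψm hφm
    rw [h, eu', ← hq]
  have m5 : ∫ ω, indf t (X ω) * indf s (Y ω) * indf s (Y' ω) ∂μ = r * q := by
    have h : ∫ ω, indf t (X ω) * indf s (Y ω) * indf s (Y' ω) ∂μ
        = (∫ ω, indf t (X ω) * indf s (Y ω) ∂μ) * ∫ ω, indf s (Y' ω) ∂μ :=
      int_mul_pair hP1 hP2 hI12 hχm hψm
    rw [h, ev', ← hr]
  have m6 : ∫ ω, indf s (Y ω) * (indf t (X' ω) * indf s (Y' ω)) ∂μ = q * r := by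
    have h : ∫ ω, indf s (Y ω) * (indf t (X' ω) * indf s (Y' ω)) ∂μ
        = (∫ ω, indf s (Y ω) ∂μ) * ∫ ω, indf t (X' ω) * indf s (Y' ω) ∂μ :=
      int_mul_pair hP1 hP2 hI12 hψm hχm
    rw [h, euv', ← hq]
  have m7 : ∫ ω, indf t (X ω) * indf s (Y ω) * indf t (X' ω) ∂μ = r * p := by
    have h : ∫ ω, indf t (X ω) * indf s (Y ω) * indf t (X' ω) ∂μ
        = (∫ ω, indf t (X ω) * indf s (Y ω) ∂μ) * ∫ ω, indf t (X' ω) ∂μ :=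
      int_mul_pair hP1 hP2 hI12 hχm hφm
    rw [h, eu', ← hr]
  have m8 : ∫ ω, indf t (X ω) * (indf t (X' ω) * indf s (Y' ω)) ∂μ = p * r := by
    have h : ∫ ω, indf t (X ω) * (indf t (X' ω) * indf s (Y' ω)) ∂μ
        = (∫ ω, indf t (X ω) ∂μ) * ∫ ω, indf t (X' ω) * indf s (Y' ω) ∂μ :=
      int_mul_pair hP1 hP2 hI12 hφm hχm
    rw [h, euv', ← hp]
  have m9 : ∫ ω, indf t (X ω) * indf s (Y ω) * (indf t (X' ω) * indf s (Y' ω)) ∂μ = r * r := by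
    have h : ∫ ω, indf t (X ω) * indf s (Y ω) * (indf t (X' ω) * indf s (Y' ω)) ∂μ
        = (∫ ω, indf t (X ω) * indf s (Y ω) ∂μ) * ∫ ω, indf t (X' ω) * indf s (Y' ω) ∂μ :=
      int_mul_pair hP1 hP2 hI12 hχm hχm
    rw [h, euv', ← hr]
  have m10 : ∫ ω, indf t (X ω) * indf t (X' ω) ∂μ = p * p := by
    have h : ∫ ω, indf t (X ω) * indf t (X' ω) ∂μ
        = (∫ ω, indf t (X ω) ∂μ) * ∫ ω, indf t (X' ω) ∂μ :=
      int_mul_pair hP1 hP2 hI12 hφm hφm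
    rw [h, eu', ← hp]
  have m11 : ∫ ω, indf s (Y ω) * indf s (Y' ω) ∂μ = q * q := by
    have h : ∫ ω, indf s (Y ω) * indf s (Y' ω) ∂μ
        = (∫ ω, indf s (Y ω) ∂μ) * ∫ ω, indf s (Y' ω) ∂μ :=
      int_mul_pair hP1 hP2 hI12 hψm hψm
    rw [h, ev', ← hq]
  -- T3 monomials
  have n2 : ∫ ω, indf t (X ω) * indf s (Y'' ω) ∂μ = p * q := by
    have h : ∫ ω, indf t (X ω) * indf s (Y'' ω) ∂μ
        = (∫ ω, indf t (X ω) ∂μ) * ∫ ω, indf s (Y'' ω) ∂μ :=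
      int_mul_pair hP1 hP3 hI13 hφm hψm
    rw [h, ev'', ← hp]
  have n4 : ∫ ω, indf t (X' ω) * indf s (Y'' ω) ∂μ = p * q := by
    have h : ∫ ω, indf t (X' ω) * indf s (Y'' ω) ∂μ
        = (∫ ω, indf t (X' ω) ∂μ) * ∫ ω, indf s (Y'' ω) ∂μ :=
      int_mul_pair hP2 hP3 hI23 hφm hψm
    rw [h, eu', ev'']
  have n5 : ∫ ω, indf t (X ω) * indf s (Y ω) * indf s (Y'' ω) ∂μ = r * q := by
    have h : ∫ ω, indf t (X ω) * indf s (Y ω) * indf s (Y'' ω) ∂μ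
        = (∫ ω, indf t (X ω) * indf s (Y ω) ∂μ) * ∫ ω, indf s (Y'' ω) ∂μ :=
      int_mul_pair hP1 hP3 hI13 hχm hψm
    rw [h, ev'', ← hr]
  have n6 : ∫ ω, indf s (Y ω) * (indf t (X' ω) * indf s (Y'' ω)) ∂μ = q * p * q := by
    have h : ∫ ω, indf s (Y ω) * (indf t (X' ω) * indf s (Y'' ω)) ∂μ
        = (∫ ω, indf s (Y ω) ∂μ) * (∫ ω, indf t (X' ω) ∂μ) * ∫ ω, indf s (Y'' ω) ∂μ :=
      int_mul_triple' hP1 hP2 hP3 hI12 hI12_3 hψm hφm hψm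
    rw [h, eu', ev'', ← hq]
  have n8 : ∫ ω, indf t (X ω) * (indf t (X' ω) * indf s (Y'' ω)) ∂μ = p * p * q := by
    have h : ∫ ω, indf t (X ω) * (indf t (X' ω) * indf s (Y'' ω)) ∂μ
        = (∫ ω, indf t (X ω) ∂μ) * (∫ ω, indf t (X' ω) ∂μ) * ∫ ω, indf s (Y'' ω) ∂μ :=
      int_mul_triple' hP1 hP2 hP3 hI12 hI12_3 hφm hφm hψm
    rw [h, eu', ev'', ← hp]
  have n9 : ∫ ω, indf t (X ω) * indf s (Y ω) * (indf t (X' ω) * indf s (Y'' ω)) ∂μ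
      = r * p * q := by
    have h : ∫ ω, indf t (X ω) * indf s (Y ω) * (indf t (X' ω) * indf s (Y'' ω)) ∂μ
        = (∫ ω, indf t (X ω) * indf s (Y ω) ∂μ) * (∫ ω, indf t (X' ω) ∂μ)
          * ∫ ω, indf s (Y'' ω) ∂μ := by
      have h0 : ∫ ω, indf t (X ω) * indf s (Y ω) * (indf t (X' ω) * indf s (Y'' ω)) ∂μ
          = ∫ ω, (indf t (X ω) * indf s (Y ω)) * indf t (X' ω) * indf s (Y'' ω) ∂μ := by
        congr 1; funext ω; ring
      rw [h0]
      exact int_mul_triple hP1 hP2 hP3 hI12 hI12_3 hχm hφm hψm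
    rw [h, eu', ev'', ← hr]
  -- T4 monomials
  have k3 : ∫ ω, indf s (Y ω) * indf t (X'' ω) ∂μ = q * p := by
    have h : ∫ ω, indf s (Y ω) * indf t (X'' ω) ∂μ
        = (∫ ω, indf s (Y ω) ∂μ) * ∫ ω, indf t (X'' ω) ∂μ :=
      int_mul_pair hP1 hP3 hI13 hψm hφm
    rw [h, eu'', ← hq]
  have k4 : ∫ ω, indf t (X'' ω) * indf s (Y' ω) ∂μ = p * q := by
    have h : ∫ ω, indf t (X'' ω) * indf s (Y' ω) ∂μ
        = (∫ ω, indf t (X'' ω) ∂μ) * ∫ ω, indf s (Y' ω) ∂μ :=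
      int_mul_pair hP3 hP2 hI23.symm hφm hψm
    rw [h, eu'', ev']
  have k6 : ∫ ω, indf s (Y ω) * (indf t (X'' ω) * indf s (Y' ω)) ∂μ = q * p * q := by
    have h : ∫ ω, indf s (Y ω) * (indf t (X'' ω) * indf s (Y' ω)) ∂μ
        = (∫ ω, indf s (Y ω) ∂μ) * (∫ ω, indf t (X'' ω) ∂μ) * ∫ ω, indf s (Y' ω) ∂μ :=
      int_mul_triple' hP1 hP3 hP2 hI13 hI13_2 hψm hφm hψm
    rw [h, eu'', ev', ← hq]
  have k7 : ∫ ω, indf t (X ω) * indf s (Y ω) * indf t (X'' ω) ∂μ = r * p := by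
    have h : ∫ ω, indf t (X ω) * indf s (Y ω) * indf t (X'' ω) ∂μ
        = (∫ ω, indf t (X ω) * indf s (Y ω) ∂μ) * ∫ ω, indf t (X'' ω) ∂μ :=
      int_mul_pair hP1 hP3 hI13 hχm hφm
    rw [h, eu'', ← hr]
  have k8 : ∫ ω, indf t (X ω) * (indf t (X'' ω) * indf s (Y' ω)) ∂μ = p * p * q := by
    have h : ∫ ω, indf t (X ω) * (indf t (X'' ω) * indf s (Y' ω)) ∂μ
        = (∫ ω, indf t (X ω) ∂μ) * (∫ ω, indf t (X'' ω) ∂μ) * ∫ ω, indf s (Y' ω) ∂μ :=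
      int_mul_triple' hP1 hP3 hP2 hI13 hI13_2 hφm hφm hψm
    rw [h, eu'', ev', ← hp]
  have k9 : ∫ ω, indf t (X ω) * indf s (Y ω) * (indf t (X'' ω) * indf s (Y' ω)) ∂μ
      = r * p * q := by
    have h : ∫ ω, indf t (X ω) * indf s (Y ω) * (indf t (X'' ω) * indf s (Y' ω)) ∂μ
        = (∫ ω, indf t (X ω) * indf s (Y ω) ∂μ) * (∫ ω, indf t (X'' ω) ∂μ)
          * ∫ ω, indf s (Y' ω) ∂μ :=
      int_mul_triple' hP1 hP3 hP2 hI13 hI13_2 hχm hφm hψm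
    rw [h, eu'', ev', ← hr]
  -- integrability
  have b1 : ∀ t' x, |indf t' x| ≤ (1:ℝ) := abs_indf_le_one
  have iu := intg hu (fun ω => b1 _ _)
  have iu' := intg hu' (fun ω => b1 _ _)
  have iu'' := intg hu'' (fun ω => b1 _ _)
  have iv := intg hv (fun ω => b1 _ _)
  have iv' := intg hv' (fun ω => b1 _ _)
  have iv'' := intg hv'' (fun ω => b1 _ _)
  have iuv : Integrable (fun ω => indf t (X ω) * indf s (Y ω)) μ :=
    intg (hu.mul hv) (fun ω => abs_mul_le_one (b1 _ _) (b1 _ _))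
  have iuv' : Integrable (fun ω => indf t (X ω) * indf s (Y' ω)) μ :=
    intg (hu.mul hv') (fun ω => abs_mul_le_one (b1 _ _) (b1 _ _))
  have ivu' : Integrable (fun ω => indf s (Y ω) * indf t (X' ω)) μ :=
    intg (hv.mul hu') (fun ω => abs_mul_le_one (b1 _ _) (b1 _ _))
  have iu'v' : Integrable (fun ω => indf t (X' ω) * indf s (Y' ω)) μ :=
    intg (hu'.mul hv') (fun ω => abs_mul_le_one (b1 _ _) (b1 _ _))
  have iuvv' : Integrable (fun ω => indf t (X ω) * indf s (Y ω) * indf s (Y' ω)) μ :=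
    intg ((hu.mul hv).mul hv') (fun ω => abs_mul_le_one (abs_mul_le_one (b1 _ _) (b1 _ _)) (b1 _ _))
  have ivu'v' : Integrable (fun ω => indf s (Y ω) * (indf t (X' ω) * indf s (Y' ω))) μ :=
    intg (hv.mul (hu'.mul hv')) (fun ω => abs_mul_le_one (b1 _ _) (abs_mul_le_one (b1 _ _) (b1 _ _)))
  have iuvu' : Integrable (fun ω => indf t (X ω) * indf s (Y ω) * indf t (X' ω)) μ :=
    intg ((hu.mul hv).mul hu') (fun ω => abs_mul_le_one (abs_mul_le_one (b1 _ _) (b1 _ _)) (b1 _ _))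
  have iuu'v' : Integrable (fun ω => indf t (X ω) * (indf t (X' ω) * indf s (Y' ω))) μ :=
    intg (hu.mul (hu'.mul hv')) (fun ω => abs_mul_le_one (b1 _ _) (abs_mul_le_one (b1 _ _) (b1 _ _)))
  have iuvu'v' : Integrable (fun ω => indf t (X ω) * indf s (Y ω) * (indf t (X' ω) * indf s (Y' ω))) μ :=
    intg ((hu.mul hv).mul (hu'.mul hv'))
      (fun ω => abs_mul_le_one (abs_mul_le_one (b1 _ _) (b1 _ _)) (abs_mul_le_one (b1 _ _) (b1 _ _)))
  have iuv'' : Integrable (fun ω => indf t (X ω) * indf s (Y'' ω)) μ :=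
    intg (hu.mul hv'') (fun ω => abs_mul_le_one (b1 _ _) (b1 _ _))
  have iu'v'' : Integrable (fun ω => indf t (X' ω) * indf s (Y'' ω)) μ :=
    intg (hu'.mul hv'') (fun ω => abs_mul_le_one (b1 _ _) (b1 _ _))
  have iuvv'' : Integrable (fun ω => indf t (X ω) * indf s (Y ω) * indf s (Y'' ω)) μ :=
    intg ((hu.mul hv).mul hv'') (fun ω => abs_mul_le_one (abs_mul_le_one (b1 _ _) (b1 _ _)) (b1 _ _))
  have ivu'v'' : Integrable (fun ω => indf s (Y ω) * (indf t (X' ω) * indf s (Y'' ω))) μ :=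
    intg (hv.mul (hu'.mul hv'')) (fun ω => abs_mul_le_one (b1 _ _) (abs_mul_le_one (b1 _ _) (b1 _ _)))
  have iuu'v'' : Integrable (fun ω => indf t (X ω) * (indf t (X' ω) * indf s (Y'' ω))) μ :=
    intg (hu.mul (hu'.mul hv'')) (fun ω => abs_mul_le_one (b1 _ _) (abs_mul_le_one (b1 _ _) (b1 _ _)))
  have iuvu'v'' : Integrable (fun ω => indf t (X ω) * indf s (Y ω) * (indf t (X' ω) * indf s (Y'' ω))) μ :=
    intg ((hu.mul hv).mul (hu'.mul hv''))
      (fun ω => abs_mul_le_one (abs_mul_le_one (b1 _ _) (b1 _ _)) (abs_mul_le_one (b1 _ _) (b1 _ _)))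
  have ivu'a : Integrable (fun ω => indf s (Y ω) * indf t (X'' ω)) μ :=
    intg (hv.mul hu'') (fun ω => abs_mul_le_one (b1 _ _) (b1 _ _))
  have iu''v' : Integrable (fun ω => indf t (X'' ω) * indf s (Y' ω)) μ :=
    intg (hu''.mul hv') (fun ω => abs_mul_le_one (b1 _ _) (b1 _ _))
  have ivu''v' : Integrable (fun ω => indf s (Y ω) * (indf t (X'' ω) * indf s (Y' ω))) μ :=
    intg (hv.mul (hu''.mul hv')) (fun ω => abs_mul_le_one (b1 _ _) (abs_mul_le_one (b1 _ _) (b1 _ _)))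
  have iuvu'' : Integrable (fun ω => indf t (X ω) * indf s (Y ω) * indf t (X'' ω)) μ :=
    intg ((hu.mul hv).mul hu'') (fun ω => abs_mul_le_one (abs_mul_le_one (b1 _ _) (b1 _ _)) (b1 _ _))
  have iuu''v' : Integrable (fun ω => indf t (X ω) * (indf t (X'' ω) * indf s (Y' ω))) μ :=
    intg (hu.mul (hu''.mul hv')) (fun ω => abs_mul_le_one (b1 _ _) (abs_mul_le_one (b1 _ _) (b1 _ _)))
  have iuvu''v' : Integrable (fun ω => indf t (X ω) * indf s (Y ω) * (indf t (X'' ω) * indf s (Y' ω))) μ :=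
    intg ((hu.mul hv).mul (hu''.mul hv'))
      (fun ω => abs_mul_le_one (abs_mul_le_one (b1 _ _) (b1 _ _)) (abs_mul_le_one (b1 _ _) (b1 _ _)))
  have iuu' : Integrable (fun ω => indf t (X ω) * indf t (X' ω)) μ :=
    intg (hu.mul hu') (fun ω => abs_mul_le_one (b1 _ _) (b1 _ _))
  have ivv' : Integrable (fun ω => indf s (Y ω) * indf s (Y' ω)) μ :=
    intg (hv.mul hv') (fun ω => abs_mul_le_one (b1 _ _) (b1 _ _))
  -- T1
  have hT1 : ∫ ω, |indf t (X ω) - indf t (X' ω)| * |indf s (Y ω) - indf s (Y' ω)| ∂μ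
      = r + p * q + q * p + r - 2 * (r * q) - 2 * (q * r) - 2 * (r * p) - 2 * (p * r)
        + 4 * (r * r) := by
    have hpt : (fun ω => |indf t (X ω) - indf t (X' ω)| * |indf s (Y ω) - indf s (Y' ω)|)
        = fun ω => indf t (X ω) * indf s (Y ω) + indf t (X ω) * indf s (Y' ω)
          + indf s (Y ω) * indf t (X' ω) + indf t (X' ω) * indf s (Y' ω)
          - 2 * (indf t (X ω) * indf s (Y ω) * indf s (Y' ω))
          - 2 * (indf s (Y ω) * (indf t (X' ω) * indf s (Y' ω)))
          - 2 * (indf t (X ω) * indf s (Y ω) * indf t (X' ω))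
          - 2 * (indf t (X ω) * (indf t (X' ω) * indf s (Y' ω)))
          + 4 * (indf t (X ω) * indf s (Y ω) * (indf t (X' ω) * indf s (Y' ω))) :=
      funext fun ω => expand_T1 (indf_mem _ _) (indf_mem _ _) (indf_mem _ _) (indf_mem _ _)
    rw [hpt, integral_comb9 iuv iuv' ivu' iu'v' iuvv' ivu'v' iuvu' iuu'v' iuvu'v',
      ← hr, m2, m3, euv', m5, m6, m7, m8, m9]
  -- T3
  have hT3 : ∫ ω, |indf t (X ω) - indf t (X' ω)| * |indf s (Y ω) - indf s (Y'' ω)| ∂μ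
      = r + p * q + q * p + p * q - 2 * (r * q) - 2 * (q * p * q) - 2 * (r * p)
        - 2 * (p * p * q) + 4 * (r * p * q) := by
    have hpt : (fun ω => |indf t (X ω) - indf t (X' ω)| * |indf s (Y ω) - indf s (Y'' ω)|)
        = fun ω => indf t (X ω) * indf s (Y ω) + indf t (X ω) * indf s (Y'' ω)
          + indf s (Y ω) * indf t (X' ω) + indf t (X' ω) * indf s (Y'' ω)
          - 2 * (indf t (X ω) * indf s (Y ω) * indf s (Y'' ω))
          - 2 * (indf s (Y ω) * (indf t (X' ω) * indf s (Y'' ω)))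
          - 2 * (indf t (X ω) * indf s (Y ω) * indf t (X' ω))
          - 2 * (indf t (X ω) * (indf t (X' ω) * indf s (Y'' ω)))
          + 4 * (indf t (X ω) * indf s (Y ω) * (indf t (X' ω) * indf s (Y'' ω))) :=
      funext fun ω => expand_T1 (indf_mem _ _) (indf_mem _ _) (indf_mem _ _) (indf_mem _ _)
    rw [hpt, integral_comb9 iuv iuv'' ivu' iu'v'' iuvv'' ivu'v'' iuvu' iuu'v'' iuvu'v'',
      ← hr, n2, m3, n4, n5, n6, m7, n8, n9]
  -- T4
  have hT4 : ∫ ω, |indf t (X ω) - indf t (X'' ω)| * |indf s (Y ω) - indf s (Y' ω)| ∂μ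
      = r + p * q + q * p + p * q - 2 * (r * q) - 2 * (q * p * q) - 2 * (r * p)
        - 2 * (p * p * q) + 4 * (r * p * q) := by
    have hpt : (fun ω => |indf t (X ω) - indf t (X'' ω)| * |indf s (Y ω) - indf s (Y' ω)|)
        = fun ω => indf t (X ω) * indf s (Y ω) + indf t (X ω) * indf s (Y' ω)
          + indf s (Y ω) * indf t (X'' ω) + indf t (X'' ω) * indf s (Y' ω)
          - 2 * (indf t (X ω) * indf s (Y ω) * indf s (Y' ω))
          - 2 * (indf s (Y ω) * (indf t (X'' ω) * indf s (Y' ω)))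
          - 2 * (indf t (X ω) * indf s (Y ω) * indf t (X'' ω))
          - 2 * (indf t (X ω) * (indf t (X'' ω) * indf s (Y' ω)))
          + 4 * (indf t (X ω) * indf s (Y ω) * (indf t (X'' ω) * indf s (Y' ω))) :=
      funext fun ω => expand_T1 (indf_mem _ _) (indf_mem _ _) (indf_mem _ _) (indf_mem _ _)
    rw [hpt, integral_comb9 iuv iuv' ivu'a iu''v' iuvv' ivu''v' iuvu'' iuu''v' iuvu''v',
      ← hr, m2, k3, k4, m5, k6, k7, k8, k9]
  -- marginals
  have hEa : ∫ ω, |indf t (X ω) - indf t (X' ω)| ∂μ = p + p - 2 * (p * p) := by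
    have hpt : (fun ω => |indf t (X ω) - indf t (X' ω)|)
        = fun ω => indf t (X ω) + indf t (X' ω) - 2 * (indf t (X ω) * indf t (X' ω)) :=
      funext fun ω => expand_single (indf_mem _ _) (indf_mem _ _)
    rw [hpt, integral_comb3 iu iu' iuu', ← hp, eu', m10]
  have hEb : ∫ ω, |indf s (Y ω) - indf s (Y' ω)| ∂μ = q + q - 2 * (q * q) := by
    have hpt : (fun ω => |indf s (Y ω) - indf s (Y' ω)|)
        = fun ω => indf s (Y ω) + indf s (Y' ω) - 2 * (indf s (Y ω) * indf s (Y' ω)) :=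
      funext fun ω => expand_single (indf_mem _ _) (indf_mem _ _)
    rw [hpt, integral_comb3 iv iv' ivv', ← hq, ev', m11]
  rw [hT1, hT3, hT4, hEa, hEb]
  -- bounds on p q r
  have hp0 : 0 ≤ p := integral_nonneg fun ω => indf_nonneg _ _
  have hq0 : 0 ≤ q := integral_nonneg fun ω => indf_nonneg _ _
  have hr0 : 0 ≤ r := integral_nonneg fun ω => mul_nonneg (indf_nonneg _ _) (indf_nonneg _ _)
  have hone : ∫ (_ : Ω), (1:ℝ) ∂μ = 1 := by simp
  have hp1 : p ≤ 1 := by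
    have h := integral_mono iu (integrable_const (1:ℝ)) (fun ω => indf_le_one _ _)
    rw [hone] at h; exact h
  have hq1 : q ≤ 1 := by
    have h := integral_mono iv (integrable_const (1:ℝ)) (fun ω => indf_le_one _ _)
    rw [hone] at h; exact h
  have hrp : r ≤ p :=
    integral_mono iuv iu fun ω => mul_le_of_le_one_right (indf_nonneg _ _) (indf_le_one _ _)
  have hrq : r ≤ q :=
    integral_mono iuv iv fun ω => mul_le_of_le_one_left (indf_nonneg _ _) (indf_le_one _ _)
  have hpqr : p + q - 1 ≤ r := by
    have iadd : Integrable (fun ω => indf t (X ω) + indf s (Y ω)) μ := iu.add iv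
    have hL : ∫ ω, (indf t (X ω) + indf s (Y ω) - 1) ∂μ = p + q - 1 := by
      rw [integral_sub iadd (integrable_const 1), integral_add iu iv, integral_const]
      simp
      rfl
    have isub : Integrable (fun ω => indf t (X ω) + indf s (Y ω) - 1) μ :=
      iadd.sub (integrable_const 1)
    have h := integral_mono isub iuv
      (fun ω => onebit_sum (indf_mem _ _) (indf_mem _ _))
    rw [hL] at h; exact h
  clear_value p q r
  have key : r + p * q + q * p + r - 2 * (r * q) - 2 * (q * r) - 2 * (r * p) - 2 * (p * r)
        + 4 * (r * r) + (p + p - 2 * (p * p)) * (q + q - 2 * (q * q))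
        - (r + p * q + q * p + p * q - 2 * (r * q) - 2 * (q * p * q) - 2 * (r * p)
          - 2 * (p * p * q) + 4 * (r * p * q))
        - (r + p * q + q * p + p * q - 2 * (r * q) - 2 * (q * p * q) - 2 * (r * p)
          - 2 * (p * p * q) + 4 * (r * p * q))
      = 4 * (r - p * q) ^ 2 := by ring
  linarith [key, quarter_bound p q r hp0 hp1 hq0 hq1 hr0 hrp hrq hpqr]
end Psi

section Main
variable {Ω : Type*} [MeasurableSpace Ω]

lemma indf_sub_le_one (t x x' : ℝ) : |indf t x - indf t x'| ≤ 1 := by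
  rcases indf_mem t x with h | h <;> rcases indf_mem t x' with h' | h' <;> rw [h, h'] <;> norm_num

lemma abs_indf_sub_le_one (t x x' : ℝ) : |(|indf t x - indf t x'|)| ≤ 1 := by
  rw [abs_abs]; exact indf_sub_le_one t x x'

theorem dCov_sq_le_of_bounded_real_aux
    (μ : Measure Ω) [IsProbabilityMeasure μ]
    (a b c d : ℝ) (hab : a ≤ b) (hcd : c ≤ d)
    (X X' X'' : Ω → ℝ) (Y Y' Y'' : Ω → ℝ)
    (hXm : Measurable X) (hX'm : Measurable X') (hX''m : Measurable X'')
    (hYm : Measurable Y) (hY'm : Measurable Y') (hY''m : Measurable Y'')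
    (hindep : iIndepFun
      ![fun ω => (X ω, Y ω), fun ω => (X' ω, Y' ω), fun ω => (X'' ω, Y'' ω)] μ)
    (hid1 : IdentDistrib (fun ω => (X ω, Y ω)) (fun ω => (X' ω, Y' ω)) μ μ)
    (hid2 : IdentDistrib (fun ω => (X ω, Y ω)) (fun ω => (X'' ω, Y'' ω)) μ μ)
    (hXab : ∀ᵐ ω ∂μ, X ω ∈ Set.Icc a b)
    (hX'ab : ∀ᵐ ω ∂μ, X' ω ∈ Set.Icc a b)
    (hX''ab : ∀ᵐ ω ∂μ, X'' ω ∈ Set.Icc a b)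
    (hYcd : ∀ᵐ ω ∂μ, Y ω ∈ Set.Icc c d)
    (hY'cd : ∀ᵐ ω ∂μ, Y' ω ∈ Set.Icc c d)
    (hY''cd : ∀ᵐ ω ∂μ, Y'' ω ∈ Set.Icc c d) :
    (∫ ω, |X ω - X' ω| * |Y ω - Y' ω| ∂μ)
          + (∫ ω, |X ω - X' ω| ∂μ) * (∫ ω, |Y ω - Y' ω| ∂μ)
          - (∫ ω, |X ω - X' ω| * |Y ω - Y'' ω| ∂μ)
          - (∫ ω, |X ω - X'' ω| * |Y ω - Y' ω| ∂μ)
        ≤ (1 / 4) * ((b - a) * (d - c)) := by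
  set I := Set.Ioc a b with hI
  set J := Set.Ioc c d with hJ
  set νI := volume.restrict I with hνI
  set νJ := volume.restrict J with hνJ
  haveI fI : IsFiniteMeasure νI := ⟨by
    rw [hνI, Measure.restrict_apply_univ, hI, Real.volume_Ioc]; exact ENNReal.ofReal_lt_top⟩
  haveI fJ : IsFiniteMeasure νJ := ⟨by
    rw [hνJ, Measure.restrict_apply_univ, hJ, Real.volume_Ioc]; exact ENNReal.ofReal_lt_top⟩
  set ν := νI.prod νJ with hν
  -- joint measurability pieces
  have mXX' : Measurable (fun ρ : Ω × (ℝ × ℝ) => |indf ρ.2.1 (X ρ.1) - indf ρ.2.1 (X' ρ.1)|) :=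
    ((measurable_indf.comp ((measurable_fst.comp measurable_snd).prodMk
        (hXm.comp measurable_fst))).sub
      (measurable_indf.comp ((measurable_fst.comp measurable_snd).prodMk
        (hX'm.comp measurable_fst)))).abs
  have mXX'' : Measurable (fun ρ : Ω × (ℝ × ℝ) => |indf ρ.2.1 (X ρ.1) - indf ρ.2.1 (X'' ρ.1)|) :=
    ((measurable_indf.comp ((measurable_fst.comp measurable_snd).prodMk
        (hXm.comp measurable_fst))).sub
      (measurable_indf.comp ((measurable_fst.comp measurable_snd).prodMk
        (hX''m.comp measurable_fst)))).abs
  have mYY' : Measurable (fun ρ : Ω × (ℝ × ℝ) => |indf ρ.2.2 (Y ρ.1) - indf ρ.2.2 (Y' ρ.1)|) :=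
    ((measurable_indf.comp ((measurable_snd.comp measurable_snd).prodMk
        (hYm.comp measurable_fst))).sub
      (measurable_indf.comp ((measurable_snd.comp measurable_snd).prodMk
        (hY'm.comp measurable_fst)))).abs
  have mYY'' : Measurable (fun ρ : Ω × (ℝ × ℝ) => |indf ρ.2.2 (Y ρ.1) - indf ρ.2.2 (Y'' ρ.1)|) :=
    ((measurable_indf.comp ((measurable_snd.comp measurable_snd).prodMk
        (hYm.comp measurable_fst))).sub
      (measurable_indf.comp ((measurable_snd.comp measurable_snd).prodMk
        (hY''m.comp measurable_fst)))).abs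
  have mXX'1 : Measurable (fun ρ : Ω × ℝ => |indf ρ.2 (X ρ.1) - indf ρ.2 (X' ρ.1)|) :=
    ((measurable_indf.comp (measurable_snd.prodMk (hXm.comp measurable_fst))).sub
      (measurable_indf.comp (measurable_snd.prodMk (hX'm.comp measurable_fst)))).abs
  have mYY'1 : Measurable (fun ρ : Ω × ℝ => |indf ρ.2 (Y ρ.1) - indf ρ.2 (Y' ρ.1)|) :=
    ((measurable_indf.comp (measurable_snd.prodMk (hYm.comp measurable_fst))).sub
      (measurable_indf.comp (measurable_snd.prodMk (hY'm.comp measurable_fst)))).abs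
  -- integrability on product spaces
  have intAB : Integrable (Function.uncurry (fun (ω : Ω) (z : ℝ × ℝ) =>
      |indf z.1 (X ω) - indf z.1 (X' ω)| * |indf z.2 (Y ω) - indf z.2 (Y' ω)|)) (μ.prod ν) := by
    refine integrable_of_bdd ((mXX'.mul mYY').aestronglyMeasurable) 1 (.of_forall fun ρ => ?_)
    exact abs_mul_le_one (abs_indf_sub_le_one _ _ _) (abs_indf_sub_le_one _ _ _)
  have intAB'' : Integrable (Function.uncurry (fun (ω : Ω) (z : ℝ × ℝ) =>
      |indf z.1 (X ω) - indf z.1 (X' ω)| * |indf z.2 (Y ω) - indf z.2 (Y'' ω)|)) (μ.prod ν) := by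
    refine integrable_of_bdd ((mXX'.mul mYY'').aestronglyMeasurable) 1 (.of_forall fun ρ => ?_)
    exact abs_mul_le_one (abs_indf_sub_le_one _ _ _) (abs_indf_sub_le_one _ _ _)
  have intA''B : Integrable (Function.uncurry (fun (ω : Ω) (z : ℝ × ℝ) =>
      |indf z.1 (X ω) - indf z.1 (X'' ω)| * |indf z.2 (Y ω) - indf z.2 (Y' ω)|)) (μ.prod ν) := by
    refine integrable_of_bdd ((mXX''.mul mYY').aestronglyMeasurable) 1 (.of_forall fun ρ => ?_)
    exact abs_mul_le_one (abs_indf_sub_le_one _ _ _) (abs_indf_sub_le_one _ _ _)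
  have intA : Integrable (Function.uncurry (fun (ω : Ω) (t : ℝ) =>
      |indf t (X ω) - indf t (X' ω)|)) (μ.prod νI) := by
    refine integrable_of_bdd (mXX'1.aestronglyMeasurable) 1 (.of_forall fun ρ => ?_)
    exact abs_indf_sub_le_one _ _ _
  have intB : Integrable (Function.uncurry (fun (ω : Ω) (s : ℝ) =>
      |indf s (Y ω) - indf s (Y' ω)|)) (μ.prod νJ) := by
    refine integrable_of_bdd (mYY'1.aestronglyMeasurable) 1 (.of_forall fun ρ => ?_)
    exact abs_indf_sub_le_one _ _ _
  -- representations via Fubini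
  have repAB : ∫ ω, |X ω - X' ω| * |Y ω - Y' ω| ∂μ
      = ∫ z, (∫ ω, |indf z.1 (X ω) - indf z.1 (X' ω)|
          * |indf z.2 (Y ω) - indf z.2 (Y' ω)| ∂μ) ∂ν := by
    have h1 : ∫ ω, |X ω - X' ω| * |Y ω - Y' ω| ∂μ
        = ∫ ω, (∫ z, |indf z.1 (X ω) - indf z.1 (X' ω)|
            * |indf z.2 (Y ω) - indf z.2 (Y' ω)| ∂ν) ∂μ := by
      refine integral_congr_ae ?_
      filter_upwards [hXab, hX'ab, hYcd, hY'cd] with ω w1 w2 w3 w4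
      calc |X ω - X' ω| * |Y ω - Y' ω|
          = (∫ t, |indf t (X ω) - indf t (X' ω)| ∂νI)
            * ∫ s, |indf s (Y ω) - indf s (Y' ω)| ∂νJ := by
            rw [abs_sub_eq_integral_indf w1 w2, abs_sub_eq_integral_indf w3 w4]
        _ = _ := (integral_prod_mul _ _).symm
    rw [h1]
    exact integral_integral_swap intAB
  have repAB'' : ∫ ω, |X ω - X' ω| * |Y ω - Y'' ω| ∂μ
      = ∫ z, (∫ ω, |indf z.1 (X ω) - indf z.1 (X' ω)|
          * |indf z.2 (Y ω) - indf z.2 (Y'' ω)| ∂μ) ∂ν := by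
    have h1 : ∫ ω, |X ω - X' ω| * |Y ω - Y'' ω| ∂μ
        = ∫ ω, (∫ z, |indf z.1 (X ω) - indf z.1 (X' ω)|
            * |indf z.2 (Y ω) - indf z.2 (Y'' ω)| ∂ν) ∂μ := by
      refine integral_congr_ae ?_
      filter_upwards [hXab, hX'ab, hYcd, hY''cd] with ω w1 w2 w3 w4
      calc |X ω - X' ω| * |Y ω - Y'' ω|
          = (∫ t, |indf t (X ω) - indf t (X' ω)| ∂νI)
            * ∫ s, |indf s (Y ω) - indf s (Y'' ω)| ∂νJ := by
            rw [abs_sub_eq_integral_indf w1 w2, abs_sub_eq_integral_indf w3 w4]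
        _ = _ := (integral_prod_mul _ _).symm
    rw [h1]
    exact integral_integral_swap intAB''
  have repA''B : ∫ ω, |X ω - X'' ω| * |Y ω - Y' ω| ∂μ
      = ∫ z, (∫ ω, |indf z.1 (X ω) - indf z.1 (X'' ω)|
          * |indf z.2 (Y ω) - indf z.2 (Y' ω)| ∂μ) ∂ν := by
    have h1 : ∫ ω, |X ω - X'' ω| * |Y ω - Y' ω| ∂μ
        = ∫ ω, (∫ z, |indf z.1 (X ω) - indf z.1 (X'' ω)|
            * |indf z.2 (Y ω) - indf z.2 (Y' ω)| ∂ν) ∂μ := by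
      refine integral_congr_ae ?_
      filter_upwards [hXab, hX''ab, hYcd, hY'cd] with ω w1 w2 w3 w4
      calc |X ω - X'' ω| * |Y ω - Y' ω|
          = (∫ t, |indf t (X ω) - indf t (X'' ω)| ∂νI)
            * ∫ s, |indf s (Y ω) - indf s (Y' ω)| ∂νJ := by
            rw [abs_sub_eq_integral_indf w1 w2, abs_sub_eq_integral_indf w3 w4]
        _ = _ := (integral_prod_mul _ _).symm
    rw [h1]
    exact integral_integral_swap intA''B
  have repA : ∫ ω, |X ω - X' ω| ∂μ
      = ∫ t, (∫ ω, |indf t (X ω) - indf t (X' ω)| ∂μ) ∂νI := by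
    have h1 : ∫ ω, |X ω - X' ω| ∂μ
        = ∫ ω, (∫ t, |indf t (X ω) - indf t (X' ω)| ∂νI) ∂μ := by
      refine integral_congr_ae ?_
      filter_upwards [hXab, hX'ab] with ω w1 w2
      rw [abs_sub_eq_integral_indf w1 w2]
    rw [h1]
    exact integral_integral_swap intA
  have repB : ∫ ω, |Y ω - Y' ω| ∂μ
      = ∫ s, (∫ ω, |indf s (Y ω) - indf s (Y' ω)| ∂μ) ∂νJ := by
    have h1 : ∫ ω, |Y ω - Y' ω| ∂μ
        = ∫ ω, (∫ s, |indf s (Y ω) - indf s (Y' ω)| ∂νJ) ∂μ := by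
      refine integral_congr_ae ?_
      filter_upwards [hYcd, hY'cd] with ω w1 w2
      rw [abs_sub_eq_integral_indf w1 w2]
    rw [h1]
    exact integral_integral_swap intB
  -- integrability over ν of the inner integrals
  have bnd : ∀ {f : Ω → ℝ}, (∀ ω, |f ω| ≤ 1) → |∫ ω, f ω ∂μ| ≤ 1 := by
    intro f hf
    have h := norm_integral_le_of_norm_le_const (μ := μ) (f := f) (C := 1)
      (Filter.Eventually.of_forall fun ω => by simpa [Real.norm_eq_abs] using hf ω)
    simpa [Real.norm_eq_abs] using h
  have ig1 : Integrable (fun z : ℝ × ℝ => ∫ ω, |indf z.1 (X ω) - indf z.1 (X' ω)|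
      * |indf z.2 (Y ω) - indf z.2 (Y' ω)| ∂μ) ν := by
    refine integrable_of_bdd ((mXX'.mul mYY').stronglyMeasurable.integral_prod_left').aestronglyMeasurable
      1 (.of_forall fun z => ?_)
    exact bnd fun ω => abs_mul_le_one (abs_indf_sub_le_one _ _ _) (abs_indf_sub_le_one _ _ _)
  have ig3 : Integrable (fun z : ℝ × ℝ => ∫ ω, |indf z.1 (X ω) - indf z.1 (X' ω)|
      * |indf z.2 (Y ω) - indf z.2 (Y'' ω)| ∂μ) ν := by
    refine integrable_of_bdd ((mXX'.mul mYY'').stronglyMeasurable.integral_prod_left').aestronglyMeasurable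
      1 (.of_forall fun z => ?_)
    exact bnd fun ω => abs_mul_le_one (abs_indf_sub_le_one _ _ _) (abs_indf_sub_le_one _ _ _)
  have ig4 : Integrable (fun z : ℝ × ℝ => ∫ ω, |indf z.1 (X ω) - indf z.1 (X'' ω)|
      * |indf z.2 (Y ω) - indf z.2 (Y' ω)| ∂μ) ν := by
    refine integrable_of_bdd ((mXX''.mul mYY').stronglyMeasurable.integral_prod_left').aestronglyMeasurable
      1 (.of_forall fun z => ?_)
    exact bnd fun ω => abs_mul_le_one (abs_indf_sub_le_one _ _ _) (abs_indf_sub_le_one _ _ _)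
  have me1 : Measurable (fun t : ℝ => ∫ ω, |indf t (X ω) - indf t (X' ω)| ∂μ) :=
    (mXX'1.stronglyMeasurable.integral_prod_left').measurable
  have me2 : Measurable (fun s : ℝ => ∫ ω, |indf s (Y ω) - indf s (Y' ω)| ∂μ) :=
    (mYY'1.stronglyMeasurable.integral_prod_left').measurable
  have ig2 : Integrable (fun z : ℝ × ℝ => (∫ ω, |indf z.1 (X ω) - indf z.1 (X' ω)| ∂μ)
      * ∫ ω, |indf z.2 (Y ω) - indf z.2 (Y' ω)| ∂μ) ν := by
    refine integrable_of_bdd ((me1.comp measurable_fst).mul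
      (me2.comp measurable_snd)).aestronglyMeasurable 1 (.of_forall fun z => ?_)
    exact abs_mul_le_one (bnd fun ω => abs_indf_sub_le_one _ _ _)
      (bnd fun ω => abs_indf_sub_le_one _ _ _)
  -- combine
  rw [repAB, repAB'', repA''B, repA, repB, ← integral_prod_mul]
  have i12 : Integrable (fun z : ℝ × ℝ =>
      (∫ ω, |indf z.1 (X ω) - indf z.1 (X' ω)| * |indf z.2 (Y ω) - indf z.2 (Y' ω)| ∂μ)
      + (∫ ω, |indf z.1 (X ω) - indf z.1 (X' ω)| ∂μ)
        * ∫ ω, |indf z.2 (Y ω) - indf z.2 (Y' ω)| ∂μ) ν := ig1.add ig2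
  have i123 : Integrable (fun z : ℝ × ℝ =>
      (∫ ω, |indf z.1 (X ω) - indf z.1 (X' ω)| * |indf z.2 (Y ω) - indf z.2 (Y' ω)| ∂μ)
      + (∫ ω, |indf z.1 (X ω) - indf z.1 (X' ω)| ∂μ)
        * ∫ ω, |indf z.2 (Y ω) - indf z.2 (Y' ω)| ∂μ
      - ∫ ω, |indf z.1 (X ω) - indf z.1 (X' ω)| * |indf z.2 (Y ω) - indf z.2 (Y'' ω)| ∂μ) ν :=
    i12.sub ig3
  have i1234 : Integrable (fun z : ℝ × ℝ =>
      (∫ ω, |indf z.1 (X ω) - indf z.1 (X' ω)| * |indf z.2 (Y ω) - indf z.2 (Y' ω)| ∂μ)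
      + (∫ ω, |indf z.1 (X ω) - indf z.1 (X' ω)| ∂μ)
        * ∫ ω, |indf z.2 (Y ω) - indf z.2 (Y' ω)| ∂μ
      - (∫ ω, |indf z.1 (X ω) - indf z.1 (X' ω)| * |indf z.2 (Y ω) - indf z.2 (Y'' ω)| ∂μ)
      - ∫ ω, |indf z.1 (X ω) - indf z.1 (X'' ω)| * |indf z.2 (Y ω) - indf z.2 (Y' ω)| ∂μ) ν :=
    i123.sub ig4
  have step : ∫ z, ((∫ ω, |indf z.1 (X ω) - indf z.1 (X' ω)|
        * |indf z.2 (Y ω) - indf z.2 (Y' ω)| ∂μ)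
      + (∫ ω, |indf z.1 (X ω) - indf z.1 (X' ω)| ∂μ)
        * (∫ ω, |indf z.2 (Y ω) - indf z.2 (Y' ω)| ∂μ)
      - (∫ ω, |indf z.1 (X ω) - indf z.1 (X' ω)| * |indf z.2 (Y ω) - indf z.2 (Y'' ω)| ∂μ)
      - (∫ ω, |indf z.1 (X ω) - indf z.1 (X'' ω)| * |indf z.2 (Y ω) - indf z.2 (Y' ω)| ∂μ)) ∂ν
      = (∫ z, (∫ ω, |indf z.1 (X ω) - indf z.1 (X' ω)|
          * |indf z.2 (Y ω) - indf z.2 (Y' ω)| ∂μ) ∂ν)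
        + (∫ z, ((∫ ω, |indf z.1 (X ω) - indf z.1 (X' ω)| ∂μ)
          * ∫ ω, |indf z.2 (Y ω) - indf z.2 (Y' ω)| ∂μ) ∂ν)
        - (∫ z, (∫ ω, |indf z.1 (X ω) - indf z.1 (X' ω)|
          * |indf z.2 (Y ω) - indf z.2 (Y'' ω)| ∂μ) ∂ν)
        - ∫ z, (∫ ω, |indf z.1 (X ω) - indf z.1 (X'' ω)|
          * |indf z.2 (Y ω) - indf z.2 (Y' ω)| ∂μ) ∂ν := by
    rw [integral_sub i123 ig4, integral_sub i12 ig3, integral_add ig1 ig2]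
  have bound : ∫ z, ((∫ ω, |indf z.1 (X ω) - indf z.1 (X' ω)|
        * |indf z.2 (Y ω) - indf z.2 (Y' ω)| ∂μ)
      + (∫ ω, |indf z.1 (X ω) - indf z.1 (X' ω)| ∂μ)
        * (∫ ω, |indf z.2 (Y ω) - indf z.2 (Y' ω)| ∂μ)
      - (∫ ω, |indf z.1 (X ω) - indf z.1 (X' ω)| * |indf z.2 (Y ω) - indf z.2 (Y'' ω)| ∂μ)
      - (∫ ω, |indf z.1 (X ω) - indf z.1 (X'' ω)| * |indf z.2 (Y ω) - indf z.2 (Y' ω)| ∂μ)) ∂ν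
      ≤ 1 / 4 * ((b - a) * (d - c)) := by
    have hmono := integral_mono i1234 (integrable_const (1/4 : ℝ))
      (fun z => psi_le μ X X' X'' Y Y' Y'' hXm hX'm hX''m hYm hY'm hY''m hindep hid1 hid2 z.1 z.2)
    rw [integral_const, measureReal_def] at hmono
    have hν_univ : (ν Set.univ).toReal = (b - a) * (d - c) := by
      rw [hν, ← Set.univ_prod_univ, Measure.prod_prod, hνI, hνJ,
        Measure.restrict_apply_univ, Measure.restrict_apply_univ, hI, hJ,
        Real.volume_Ioc, Real.volume_Ioc, ← ENNReal.ofReal_mul (by linarith)]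
      exact ENNReal.toReal_ofReal (by nlinarith)
    rw [hν_univ] at hmono
    calc _ ≤ ((b - a) * (d - c)) • (1/4 : ℝ) := hmono
      _ = 1 / 4 * ((b - a) * (d - c)) := by rw [smul_eq_mul]; ring
  linarith [step, bound]
end Main

/-- Corollary: for iid pairs `(X,Y)`, `(X',Y')`, `(X'',Y'')` of real random variables with
`X ∈ [a,b]` and `Y ∈ [c,d]` almost surely, the distance covariance satisfies
`dCov(X,Y) ≤ (1/2)·√((b−a)(d−c))`; equivalently `dCov²(X,Y) ≤ (1/4)·(b−a)(d−c)`, where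
`dCov²(X,Y) = E[|X−X'||Y−Y'|] + E[|X−X'|]E[|Y−Y'|] − E[|X−X'||Y−Y''|] − E[|X−X''||Y−Y'|]`
and `dCov(X,Y)` is its nonnegative square root. -/
theorem dCov_le_of_bounded_real
    {Ω : Type*} [MeasurableSpace Ω] (μ : Measure Ω) [IsProbabilityMeasure μ]
    (a b c d : ℝ) (hab : a ≤ b) (hcd : c ≤ d)
    (X X' X'' : Ω → ℝ) (Y Y' Y'' : Ω → ℝ)
    (hXm : Measurable X) (hX'm : Measurable X') (hX''m : Measurable X'')
    (hYm : Measurable Y) (hY'm : Measurable Y') (hY''m : Measurable Y'')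
    (hindep : iIndepFun
      ![fun ω => (X ω, Y ω), fun ω => (X' ω, Y' ω), fun ω => (X'' ω, Y'' ω)] μ)
    (hid1 : IdentDistrib (fun ω => (X ω, Y ω)) (fun ω => (X' ω, Y' ω)) μ μ)
    (hid2 : IdentDistrib (fun ω => (X ω, Y ω)) (fun ω => (X'' ω, Y'' ω)) μ μ)
    (hXab : ∀ᵐ ω ∂μ, X ω ∈ Set.Icc a b)
    (hX'ab : ∀ᵐ ω ∂μ, X' ω ∈ Set.Icc a b)
    (hX''ab : ∀ᵐ ω ∂μ, X'' ω ∈ Set.Icc a b)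
    (hYcd : ∀ᵐ ω ∂μ, Y ω ∈ Set.Icc c d)
    (hY'cd : ∀ᵐ ω ∂μ, Y' ω ∈ Set.Icc c d)
    (hY''cd : ∀ᵐ ω ∂μ, Y'' ω ∈ Set.Icc c d) :
    Real.sqrt ((∫ ω, |X ω - X' ω| * |Y ω - Y' ω| ∂μ)
          + (∫ ω, |X ω - X' ω| ∂μ) * (∫ ω, |Y ω - Y' ω| ∂μ)
          - (∫ ω, |X ω - X' ω| * |Y ω - Y'' ω| ∂μ)
          - (∫ ω, |X ω - X'' ω| * |Y ω - Y' ω| ∂μ))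
        ≤ (1 / 2) * Real.sqrt ((b - a) * (d - c))
      ∧ (∫ ω, |X ω - X' ω| * |Y ω - Y' ω| ∂μ)
          + (∫ ω, |X ω - X' ω| ∂μ) * (∫ ω, |Y ω - Y' ω| ∂μ)
          - (∫ ω, |X ω - X' ω| * |Y ω - Y'' ω| ∂μ)
          - (∫ ω, |X ω - X'' ω| * |Y ω - Y' ω| ∂μ)
        ≤ (1 / 4) * ((b - a) * (d - c)) := by
  have h2 := dCov_sq_le_of_bounded_real_aux μ a b c d hab hcd X X' X'' Y Y' Y''
    hXm hX'm hX''m hYm hY'm hY''m hindep hid1 hid2 hXab hX'ab hX''ab hYcd hY'cd hY''cd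
  refine ⟨?_, h2⟩
  calc Real.sqrt ((∫ ω, |X ω - X' ω| * |Y ω - Y' ω| ∂μ)
          + (∫ ω, |X ω - X' ω| ∂μ) * (∫ ω, |Y ω - Y' ω| ∂μ)
          - (∫ ω, |X ω - X' ω| * |Y ω - Y'' ω| ∂μ)
          - (∫ ω, |X ω - X'' ω| * |Y ω - Y' ω| ∂μ))
      ≤ Real.sqrt ((1 / 4) * ((b - a) * (d - c))) := Real.sqrt_le_sqrt h2
    _ = (1 / 2) * Real.sqrt ((b - a) * (d - c)) := by
      rw [show (1/4 : ℝ) * ((b - a) * (d - c)) = (1/2)^2 * ((b - a) * (d - c)) by norm_num,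
        Real.sqrt_mul (by positivity) _, Real.sqrt_sq (by norm_num)]
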